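/- Let I1 = [P1ℓ·P1r, Q1] be a synchronized interval with a distinguished decomposition of the lower path into Dyck paths P1ℓ, P1r (P1ℓ nonempty unless both are empty), and let I2 = [P2, Q2] be a synchronized interval. Then P = u·P1ℓ·d·P1r·P2 and Q = u·Q1·d·Q2 form a synchronized interval [P,Q]. -/

import Mathlib

/-- A Dyck word: `true` is an up step `u`, `false` is a down step `d`. -/
def IsDyck (w : List Bool) : Prop :=
  w.count true = w.count false ∧ ∀ k, (w.take k).count false ≤ (w.take k).count true

/-- Position (0-based index) of the `i`-th (1-based) up step of `w`. -/
noncomputable def upPos (w : List Bool) (i : ℕ) : ℕ :=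
  sInf {j | w.getD j false = true ∧ (w.take (j + 1)).count true = i}

/-- Position of the down step matching the up step at position `k`:
the first later down step such that the letters strictly in between form a Dyck word. -/
noncomputable def matchIdx (w : List Bool) (k : ℕ) : ℕ :=
  sInf {m | k < m ∧ w.getD m true = false ∧ IsDyck ((w.drop (k + 1)).take (m - (k + 1)))}

/-- The distance function `D_w(i)`: number of letters between the `i`-th up step and its
matching down step, plus one. -/
noncomputable def distFn (w : List Bool) (i : ℕ) : ℕ :=
  matchIdx w (upPos w i) - upPos w i

/-- One rotation step of the Tamari order on Dyck words: a factor `d · B` (with `B` a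
nonempty Dyck word) is replaced by `B · d`. -/
def TamariStep (P Q : List Bool) : Prop :=
  ∃ A B C : List Bool, IsDyck B ∧ B ≠ [] ∧
    P = A ++ false :: (B ++ C) ∧ Q = A ++ (B ++ false :: C)

/-- The Tamari order on Dyck words: reflexive-transitive closure of rotation steps. -/
def TamariLe : List Bool → List Bool → Prop := Relation.ReflTransGen TamariStep
/-- The type of a Dyck word `w` of size `n`: the word of length `n - 1` over `{N, E}`
(encoded with `true = E`, `false = N`) whose `k`-th letter is `E` iff the letter following
the `k`-th up step of `w` is an up step. -/
noncomputable def typeWord (w : List Bool) : List Bool :=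
  (List.range (w.count true - 1)).map (fun k => w.getD (upPos w (k + 1) + 1) false)

/-- A synchronized interval: a pair of Dyck words of the same size, comparable in the
Tamari order, and with the same type. -/
def Sync (P Q : List Bool) : Prop :=
  IsDyck P ∧ IsDyck Q ∧ P.length = Q.length ∧ TamariLe P Q ∧ typeWord P = typeWord Q

open List

lemma count_bool (l : List Bool) : l.count true + l.count false = l.length := by
  induction l with
  | nil => simp
  | cons a t ih => cases a <;> simp [count_cons] <;> omega

lemma dyck_two_mul {w : List Bool} (h : IsDyck w) : 2 * w.count true = w.length := by
  have := count_bool w; have := h.1; omega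

lemma lt_length_of_getD {w : List Bool} {j : ℕ} (h : w.getD j false = true) :
    j < w.length := by
  by_contra hc
  rw [List.getD_eq_default] at h
  · exact Bool.false_ne_true h
  · omega

lemma count_take_mono {w : List Bool} (b : Bool) {j m : ℕ} (h : j ≤ m) :
    (w.take j).count b ≤ (w.take m).count b := by
  have h1 : w.take j = (w.take m).take j := by
    rw [List.take_take]; congr 1; omega
  rw [h1]
  exact (List.take_sublist _ _).count_le b

lemma count_take_le {w : List Bool} (b : Bool) (j : ℕ) :
    (w.take j).count b ≤ w.count b := (List.take_sublist _ _).count_le b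

lemma count_take_succ {w : List Bool} {j : ℕ} (hj : j < w.length) (b : Bool) :
    (w.take (j+1)).count b = (w.take j).count b + (if w[j] = b then 1 else 0) := by
  rw [List.take_succ, List.getElem?_eq_getElem hj]
  cases w[j] <;> cases b <;> simp [List.count_append]

lemma getD_eq_getElem' {w : List Bool} {j : ℕ} (hj : j < w.length) :
    w.getD j false = w[j] := List.getD_eq_getElem w false hj

lemma count_take_succ_true {w : List Bool} {j : ℕ} (h : w.getD j false = true) :
    (w.take (j+1)).count true = (w.take j).count true + 1 := by
  have hj := lt_length_of_getD h
  rw [getD_eq_getElem' hj] at h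
  rw [count_take_succ hj, h]; simp

lemma exists_up {w : List Bool} {i : ℕ} (h1 : 1 ≤ i) (h2 : i ≤ w.count true) :
    ∃ j, w.getD j false = true ∧ (w.take (j+1)).count true = i := by
  set S : Set ℕ := {k | i ≤ (w.take k).count true} with hS
  have hne : S.Nonempty := ⟨w.length, by simpa [hS] using h2⟩
  have hmem := Nat.sInf_mem hne
  set m := sInf S with hm
  have hm0 : m ≠ 0 := by
    intro h0
    rw [h0] at hmem
    simp [hS] at hmem
    omega
  obtain ⟨k, hk9⟩ := Nat.exists_eq_succ_of_ne_zero hm0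
  rw [hk9] at hmem
  clear_value m
  have hk : k ∉ S := Nat.notMem_of_lt_sInf (by rw [← hm]; omega)
  have hklt : (w.take k).count true < i := by simpa [hS] using hk
  have hkm : i ≤ (w.take (k+1)).count true := hmem
  have hklen : k < w.length := by
    by_contra hc
    have he : w.take (k+1) = w.take k := by
      rw [List.take_of_length_le (by omega), List.take_of_length_le (by omega)]
    rw [he] at hkm
    omega
  have hcnt := count_take_succ hklen true
  have hup : w[k] = true := by
    cases h : w[k]
    · exfalso; rw [h] at hcnt; simp at hcnt; omega
    · rfl
  rw [hup] at hcnt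
  simp at hcnt
  exact ⟨k, by rw [getD_eq_getElem' hklen]; exact hup, by omega⟩

lemma upPos_eq {w : List Bool} {i j : ℕ} (h1 : w.getD j false = true)
    (h2 : (w.take (j+1)).count true = i) : upPos w i = j := by
  unfold upPos
  set S : Set ℕ := {j' | w.getD j' false = true ∧ (w.take (j' + 1)).count true = i}
    with hS
  have hjS : j ∈ S := ⟨h1, h2⟩
  apply _root_.le_antisymm
  · exact Nat.sInf_le hjS
  · by_contra hc
    push_neg at hc
    obtain ⟨hm1, hm2⟩ := Nat.sInf_mem (⟨j, hjS⟩ : S.Nonempty)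
    have h3 : (w.take (sInf S + 1)).count true ≤ (w.take j).count true :=
      count_take_mono true (by omega)
    have h4 := count_take_succ_true h1
    omega

lemma upPos_spec {w : List Bool} {i : ℕ} (h1 : 1 ≤ i) (h2 : i ≤ w.count true) :
    w.getD (upPos w i) false = true ∧ (w.take (upPos w i + 1)).count true = i :=
  Nat.sInf_mem (exists_up h1 h2)

lemma up_succ_lt {w : List Bool} (hw : IsDyck w) {j : ℕ} (h : w.getD j false = true) :
    j + 1 < w.length := by
  have hj := lt_length_of_getD h
  by_contra hc
  have hlen : w.length = j + 1 := by omega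
  have h1 : (w.take (j+1)).count true = (w.take j).count true + 1 :=
    count_take_succ_true h
  have h2 : (w.take (j+1)).count false = (w.take j).count false := by
    rw [count_take_succ hj, getD_eq_getElem' hj] at *
    simp [h]
  rw [← hlen, List.take_length] at h1 h2
  have := hw.2 j
  have := hw.1
  omega

lemma dyck_head {w : List Bool} (hw : IsDyck w) (hne : w ≠ []) :
    w.getD 0 false = true := by
  have hlen : 0 < w.length := List.length_pos_iff.mpr hne
  have := hw.2 1
  rw [List.take_succ] at this
  simp [List.getElem?_eq_getElem hlen] at this
  rw [getD_eq_getElem' hlen]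
  cases h : w[0] <;> simp [h] at this ⊢

lemma dyck_append {a b : List Bool} (ha : IsDyck a) (hb : IsDyck b) :
    IsDyck (a ++ b) := by
  constructor
  · simp [List.count_append, ha.1, hb.1]
  · intro k
    rw [List.take_append]
    simp only [List.count_append]
    exact Nat.add_le_add (ha.2 k) (hb.2 _)

lemma dyck_wrap {a : List Bool} (ha : IsDyck a) :
    IsDyck (true :: (a ++ [false])) := by
  constructor
  · simp [List.count_append, List.count_cons, ha.1]
  · intro k
    cases k with
    | zero => simp
    | succ m =>
      have h2 : ((([false] : List Bool)).take (m - a.length)).count false ≤ 1 :=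
        ((List.take_sublist _ _).count_le false).trans (by simp)
      have h1 : ((a ++ [false]).take m).count false
          ≤ ((a ++ [false]).take m).count true + 1 := by
        rw [List.take_append]
        simp only [List.count_append]
        have := ha.2 m
        omega
      rw [List.take_succ_cons]
      simp [List.count_cons]
      omega

lemma tamariStep_ctx {P Q : List Bool} (X Y : List Bool) (h : TamariStep P Q) :
    TamariStep (X ++ P ++ Y) (X ++ Q ++ Y) := by
  obtain ⟨A, B, C, hB, hBne, hP, hQ⟩ := h
  exact ⟨X ++ A, B, C ++ Y, hB, hBne, by simp [hP], by simp [hQ]⟩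

lemma tamariLe_ctx {P Q : List Bool} (X Y : List Bool) (h : TamariLe P Q) :
    TamariLe (X ++ P ++ Y) (X ++ Q ++ Y) :=
  Relation.ReflTransGen.lift (fun w => X ++ w ++ Y)
    (fun _ _ hs => tamariStep_ctx X Y hs) _ _ h

lemma follower_last {t : List Bool} (ht : IsDyck t) (hn : 1 ≤ t.count true) :
    t.getD (upPos t (t.count true) + 1) false = false := by
  obtain ⟨hp1, hp2⟩ := upPos_spec hn (le_refl _)
  cases h : t.getD (upPos t (t.count true) + 1) false
  · rfl
  · exfalso
    have h3 := count_take_succ_true h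
    rw [hp2] at h3
    have h4 := count_take_le (w := t) true (upPos t (t.count true) + 1 + 1)
    omega

lemma getD_append_right' {a r : List Bool} (m : ℕ) :
    (a ++ r).getD (a.length + m) false = r.getD m false := by
  rw [List.getD_append_right _ _ _ _ (Nat.le_add_right _ _)]
  simp

lemma getD_append' {a r : List Bool} {m : ℕ} (h : m < a.length) :
    (a ++ r).getD m false = a.getD m false := List.getD_append _ _ _ _ h

lemma take_append_add (a r : List Bool) (m : ℕ) :
    (a ++ r).take (a.length + m) = a ++ r.take m := by
  rw [List.take_append, List.take_of_length_le (Nat.le_add_right _ _)]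
  simp

lemma take_append_le {a r : List Bool} {m : ℕ} (h : m ≤ a.length) :
    (a ++ r).take m = a.take m := by
  rw [List.take_append, Nat.sub_eq_zero_of_le h]
  simp

lemma entry_zero (t : List Bool) : upPos (true :: t) 1 = 0 :=
  upPos_eq (by simp) (by simp)

lemma entry_zero_getD (a r : List Bool) :
    (a ++ false :: r).getD 0 false = a.getD 0 false := by
  cases a <;> simp

lemma entry_mid {a b c : List Bool} (ha : IsDyck a) (hb : IsDyck b) {k : ℕ}
    (hk1 : 1 ≤ k) (hk2 : k ≤ a.count true + b.count true) :
    (true :: (a ++ false :: (b ++ c))).getD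
      (upPos (true :: (a ++ false :: (b ++ c))) (k + 1) + 1) false
      = (a ++ b).getD (upPos (a ++ b) k + 1) false := by
  have hct : (a ++ b).count true = a.count true + b.count true := List.count_append
  obtain ⟨p, hpdef⟩ : ∃ p, upPos (a ++ b) k = p := ⟨_, rfl⟩
  obtain ⟨hp1, hp2⟩ := upPos_spec hk1 (by rw [hct]; exact hk2)
  rw [hpdef] at hp1 hp2
  rw [hpdef]
  rcases Nat.lt_or_ge p a.length with hcase | hcase
  · -- the k-th up step lies in a
    have hpa : a.getD p false = true := by rwa [getD_append' hcase] at hp1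
    have hpl : p + 1 < a.length := up_succ_lt ha hpa
    have hup : upPos (true :: (a ++ false :: (b ++ c))) (k + 1) = p + 1 := by
      apply upPos_eq
      · rw [List.getD_cons_succ, getD_append' hcase, hpa]
      · rw [List.take_succ_cons, List.count_cons]
        rw [take_append_le (le_of_lt hpl), ← take_append_le (r := b) (le_of_lt hpl), hp2]
        simp
    rw [hup, List.getD_cons_succ, getD_append' hpl, getD_append' hpl]
  · -- the k-th up step lies in b
    obtain ⟨q, rfl⟩ : ∃ q, p = a.length + q := ⟨p - a.length, by omega⟩
    have hqb : b.getD q false = true := by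
      rwa [getD_append_right'] at hp1
    have hql : q + 1 < b.length := up_succ_lt hb hqb
    have hk : a.count true + (b.take (q + 1)).count true = k := by
      rw [show a.length + q + 1 = a.length + (q + 1) by omega, take_append_add] at hp2
      rw [← hp2, List.count_append]
    have hup : upPos (true :: (a ++ false :: (b ++ c)))
        (k + 1) = a.length + q + 2 := by
      apply upPos_eq
      · rw [show a.length + q + 2 = (a.length + (q + 1)) + 1 by omega,
          List.getD_cons_succ, getD_append_right', List.getD_cons_succ,
          getD_append' (lt_of_le_of_lt (Nat.le_succ q) hql)]
        exact hqb
      · rw [show a.length + q + 2 + 1 = (a.length + (q + 2)) + 1 by omega,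
          List.take_succ_cons, take_append_add, List.take_succ_cons,
          take_append_le (le_of_lt hql)]
        simp only [List.count_cons, List.count_append]
        simp [← hk]
    rw [hup, show a.length + q + 2 + 1 = (a.length + (q + 2)) + 1 by omega,
      List.getD_cons_succ, getD_append_right', List.getD_cons_succ,
      getD_append' hql,
      show a.length + q + 1 = a.length + (q + 1) by omega, getD_append_right']

lemma entry_right {a b c : List Bool} {j : ℕ} (hj1 : 1 ≤ j) (hj2 : j ≤ c.count true) :
    (true :: (a ++ false :: (b ++ c))).getD
      (upPos (true :: (a ++ false :: (b ++ c)))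
        (a.count true + b.count true + j + 1) + 1) false
      = c.getD (upPos c j + 1) false := by
  obtain ⟨hr1, hr2⟩ := upPos_spec hj1 hj2
  set r := upPos c j with hr
  have hup : upPos (true :: (a ++ false :: (b ++ c)))
      (a.count true + b.count true + j + 1) = a.length + b.length + r + 2 := by
    apply upPos_eq
    · rw [show a.length + b.length + r + 2 = (a.length + (b.length + r + 1)) + 1 by omega,
        List.getD_cons_succ, getD_append_right', List.getD_cons_succ, getD_append_right']
      exact hr1
    · rw [show a.length + b.length + r + 2 + 1 = (a.length + (b.length + (r + 1) + 1)) + 1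
          by omega,
        List.take_succ_cons, take_append_add, List.take_succ_cons, take_append_add]
      simp only [List.count_cons, List.count_append, hr2]
      simp
      omega
  rw [hup, show a.length + b.length + r + 2 + 1 = (a.length + (b.length + (r + 1) + 1)) + 1
      by omega,
    List.getD_cons_succ, getD_append_right', List.getD_cons_succ,
    show b.length + (r + 1) = b.length + (r + 1) by rfl, getD_append_right']

lemma typeWord_entry {x y : List Bool} (h : typeWord x = typeWord y)
    (hc : x.count true = y.count true) {m : ℕ} (hm : m < x.count true - 1) :
    x.getD (upPos x (m + 1) + 1) false = y.getD (upPos y (m + 1) + 1) false := by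
  have h1 : m < (typeWord x).length := by simp [typeWord]; omega
  have h2 := List.getElem_of_eq h h1
  simpa [typeWord] using h2


/-- Composition of a properly pointed synchronized interval with a synchronized interval
yields a synchronized interval. -/
theorem sync_compose (P1l P1r Q1 P2 Q2 : List Bool)
    (h1 : IsDyck P1l) (h2 : IsDyck P1r)
    (hpt : P1l = [] → P1r = [])
    (hI1 : Sync (P1l ++ P1r) Q1) (hI2 : Sync P2 Q2) :
    Sync (true :: (P1l ++ false :: (P1r ++ P2))) (true :: (Q1 ++ false :: Q2)) := by
  obtain ⟨hDA, hDQ1, hlen1, hle1, htw1⟩ := hI1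
  obtain ⟨hDP2, hDQ2, hlen2, hle2, htw2⟩ := hI2
  have hnil : IsDyck ([] : List Bool) := ⟨rfl, by simp⟩
  have hAct : (P1l ++ P1r).count true = P1l.count true + P1r.count true :=
    List.count_append
  have hQ1c : Q1.count true = P1l.count true + P1r.count true := by
    have hA2 := dyck_two_mul hDA
    have hB2 := dyck_two_mul hDQ1
    rw [hAct] at hA2
    have hl := hlen1
    simp only [List.length_append] at hl
    omega
  have hQ2c : Q2.count true = P2.count true := by
    have := dyck_two_mul hDP2
    have := dyck_two_mul hDQ2
    omega
  have hlen1' : P1l.length + P1r.length = Q1.length := by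
    simpa using hlen1
  refine ⟨?_, ?_, ?_, ?_, ?_⟩
  · -- IsDyck of composed lower path
    have hw : true :: (P1l ++ false :: (P1r ++ P2))
        = (true :: (P1l ++ [false])) ++ (P1r ++ P2) := by simp
    rw [hw]
    exact dyck_append (dyck_wrap h1) (dyck_append h2 hDP2)
  · have hv : true :: (Q1 ++ false :: Q2) = (true :: (Q1 ++ [false])) ++ Q2 := by simp
    rw [hv]
    exact dyck_append (dyck_wrap hDQ1) hDQ2
  · simp only [List.length_cons, List.length_append]
    omega
  · -- Tamari order
    have s1 : TamariLe (true :: (P1l ++ false :: (P1r ++ P2)))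
        (true :: (P1l ++ false :: (P1r ++ Q2))) := by
      have := tamariLe_ctx (true :: (P1l ++ false :: P1r)) [] hle2
      simpa using this
    have s2 : TamariLe (true :: (P1l ++ false :: (P1r ++ Q2)))
        (true :: (P1l ++ (P1r ++ false :: Q2))) := by
      rcases eq_or_ne P1r [] with hr | hr
      · subst hr
        simp
        exact Relation.ReflTransGen.refl
      · exact Relation.ReflTransGen.single
          ⟨true :: P1l, P1r, Q2, h2, hr, by simp, by simp⟩
    have s3 : TamariLe (true :: (P1l ++ (P1r ++ false :: Q2)))
        (true :: (Q1 ++ false :: Q2)) := by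
      have := tamariLe_ctx [true] (false :: Q2) hle1
      simpa using this
    exact (s1.trans s2).trans s3
  · -- type words agree
    have hcw : (true :: (P1l ++ false :: (P1r ++ P2))).count true - 1
        = P1l.count true + P1r.count true + P2.count true := by
      simp [List.count_cons, List.count_append]
      try omega
    have hcv : (true :: (Q1 ++ false :: Q2)).count true - 1
        = P1l.count true + P1r.count true + P2.count true := by
      simp [List.count_cons, List.count_append, hQ1c, hQ2c]
      try omega
    unfold typeWord
    rw [hcw, hcv]
    apply List.map_congr_left
    intro k hk
    rw [List.mem_range] at hk
    cases k with
    | zero =>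
      rw [entry_zero, entry_zero]
      simp only [zero_add, List.getD_cons_succ]
      rw [entry_zero_getD, entry_zero_getD]
      rcases eq_or_ne P1l [] with hl | hl
      · have hr := hpt hl
        have hq : Q1 = [] := by
          rw [hl, hr] at hlen1'
          exact List.length_eq_zero_iff.mp (by simpa using hlen1'.symm)
        rw [hl, hq]
      · have hq : Q1 ≠ [] := by
          intro hq
          apply hl
          rw [hq] at hlen1'
          simp only [List.length_nil] at hlen1'
          exact List.length_eq_zero_iff.mp (by omega)
        rw [dyck_head h1 hl, dyck_head hDQ1 hq]
    | succ k' =>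
      rcases Nat.lt_or_ge k' (P1l.count true + P1r.count true) with hK | hK
      · -- middle entries
        have e1 := entry_mid (c := P2) h1 h2 (k := k' + 1) (by omega) (by omega)
        have e2 := entry_mid (c := Q2) hDQ1 hnil (k := k' + 1) (by omega)
          (by simp [hQ1c]; omega)
        simp only [List.nil_append, List.append_nil] at e2
        rw [e1, e2]
        rcases Nat.lt_or_ge (k' + 1) (P1l.count true + P1r.count true) with hK2 | hK2
        · exact typeWord_entry htw1 (by rw [hAct, hQ1c]) (by rw [hAct]; omega)
        · have f1 := follower_last hDA (by rw [hAct]; omega)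
          have f2 := follower_last hDQ1 (by rw [hQ1c]; omega)
          rw [show k' + 1 = (P1l ++ P1r).count true by rw [hAct]; omega, f1]
          rw [show (P1l ++ P1r).count true = Q1.count true by rw [hAct, hQ1c], f2]
      · -- right entries
        obtain ⟨m, hm⟩ : ∃ m, k' + 1
            = P1l.count true + P1r.count true + (m + 1) :=
          ⟨k' - (P1l.count true + P1r.count true), by omega⟩
        have hj2 : m + 1 ≤ P2.count true := by omega
        have e1 := entry_right (a := P1l) (b := P1r) (c := P2) (j := m + 1)
          (by omega) hj2
        have e2 := entry_right (a := Q1) (b := []) (c := Q2) (j := m + 1)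
          (by omega) (by rw [hQ2c]; exact hj2)
        simp only [List.nil_append, List.append_nil, List.count_nil, Nat.add_zero] at e2
        rw [show k' + 1 + 1 = P1l.count true + P1r.count true + (m + 1) + 1 by omega, e1]
        rw [show P1l.count true + P1r.count true + (m + 1) + 1
            = Q1.count true + (m + 1) + 1 by rw [hQ1c], e2]
        exact typeWord_entry htw2 (by rw [hQ2c]) (by omega)
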